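/- Let n ≥ 1 and d even with 2d > n. The dual solution c given by c_0 = 1, c_1 = (2d−n+1)/((2d−n)(2d−n+2)), c_{n−1} = 1/((2d−n)(2d−n+2)), and c_j = 0 otherwise, is feasible for the dual of the (n,d) Delsarte linear program: all c_j ≥ 0 and Σ_{j=0}^{n} c_j K_j(i;n) ≤ 0 for all i ∈ [d,n]. Moreover its objective value Σ_{j=0}^{n} c_j C(n,j) equals 2d/(2d−n). -/

import Mathlib

open Finset

/-- Integer binomial coefficient with convention C(a,b)=0 unless 0 ≤ b ≤ a. -/
def intChoose (a b : ℤ) : ℤ :=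
  if 0 ≤ a ∧ 0 ≤ b then (a.toNat.choose b.toNat : ℤ) else 0

/-- Krawtchouk polynomial K_j(i;n) = Σ_{k=0}^{j} (-1)^k C(i,k) C(n-i,j-k),
with the convention K_j(i;n)=0 if j ∉ [0,n] or i ∉ [0,n]. -/
def kraw (n : ℕ) (j i : ℤ) : ℤ :=
  ∑ k ∈ Finset.range (j.toNat + 1),
    (-1) ^ k * intChoose i k * intChoose ((n : ℤ) - i) (j - k)

/-- Feasibility for the (n,d) Delsarte linear program: A_0 = 1, A_i = 0 for
1 ≤ i ≤ d-1, A_i ≥ 0 for i ≤ n, and the Delsarte inequalities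
Σ_{i=0}^{n} A_i K_j(i;n) ≥ 0 for all 1 ≤ j ≤ n. -/
def delsarteFeasible (n d : ℕ) (A : ℕ → ℚ) : Prop :=
  A 0 = 1 ∧ (∀ i : ℕ, 1 ≤ i → i ≤ d - 1 → A i = 0) ∧
    (∀ i : ℕ, i ≤ n → 0 ≤ A i) ∧
    ∀ j : ℕ, 1 ≤ j → j ≤ n →
      0 ≤ ∑ i ∈ Finset.range (n + 1), A i * (kraw n j i : ℚ)

/-- Feasibility for the dual of the (n,d) Delsarte linear program: c_0 = 1,
c_j ≥ 0 for j ≤ n, and Σ_{j=0}^{n} c_j K_j(i;n) ≤ 0 for all d ≤ i ≤ n. -/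
def delsarteDualFeasible (n d : ℕ) (c : ℕ → ℚ) : Prop :=
  c 0 = 1 ∧ (∀ j : ℕ, j ≤ n → 0 ≤ c j) ∧
    ∀ i : ℕ, d ≤ i → i ≤ n →
      ∑ j ∈ Finset.range (n + 1), c j * (kraw n j i : ℚ) ≤ 0

lemma intChoose_natCast (a b : ℕ) : intChoose (a:ℤ) (b:ℤ) = (a.choose b : ℤ) := by
  simp [intChoose]

lemma kraw_zero (n i : ℕ) (hi : i ≤ n) : kraw n ((0:ℕ):ℤ) (i:ℤ) = 1 := by
  simp [kraw, intChoose, hi]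

lemma kraw_one (n i : ℕ) (hi : i ≤ n) : kraw n ((1:ℕ):ℤ) (i:ℤ) = (n:ℤ) - 2*i := by
  have h : ((n:ℤ) - i) = ((n - i : ℕ) : ℤ) := by omega
  simp [kraw, Finset.sum_range_succ, h, intChoose_natCast, intChoose, Nat.choose_one_right]
  omega

lemma kraw_pred (n i : ℕ) (hn : 1 ≤ n) (hi : i ≤ n) :
    kraw n ((n-1:ℕ):ℤ) (i:ℤ) = (-1)^i * ((n:ℤ) - 2*i) := by
  have hsub : ((n:ℤ) - i) = ((n - i : ℕ) : ℤ) := by omega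
  have hrange : (((n-1:ℕ):ℤ)).toNat + 1 = n := by omega
  have hterm : ∀ k ∈ Finset.range n,
      (-1:ℤ)^k * intChoose (i:ℤ) k * intChoose ((n:ℤ) - i) (((n-1:ℕ):ℤ) - k)
        = (-1:ℤ)^k * (i.choose k : ℤ) * ((n-i).choose (n-1-k) : ℤ) := by
    intro k hk
    have hk' : k < n := Finset.mem_range.mp hk
    have h2 : (((n-1:ℕ):ℤ) - k) = ((n - 1 - k : ℕ) : ℤ) := by omega
    rw [hsub, h2, intChoose_natCast, intChoose_natCast]
  rw [kraw, hrange, Finset.sum_congr rfl hterm]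
  rcases Nat.eq_zero_or_pos i with rfl | hi1
  · rw [Finset.sum_eq_single 0]
    · have : n.choose (n-1) = n.choose 1 := by
        have := Nat.choose_symm (n := n) (k := 1) hn
        simpa using this
      simp [this, Nat.choose_one_right]
    · intro k hk hk0
      simp [Nat.choose_eq_zero_of_lt (Nat.pos_of_ne_zero hk0)]
    · intro h; simp at h; omega
  obtain ⟨m, rfl⟩ : ∃ m, i = m + 1 := ⟨i - 1, by omega⟩
  have h1 : (m+1).choose m = m + 1 := Nat.choose_succ_self_right m
  rcases eq_or_lt_of_le hi with rfl | hilt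
  · rw [Finset.sum_eq_single m]
    · have h2 : m + 1 - 1 - m = 0 := by omega
      simp [h1, h2, Nat.sub_self]
      ring
    · intro k hk hk0
      have hk' : k < m + 1 := Finset.mem_range.mp hk
      have h0 : (0:ℕ).choose (m-k) = 0 := Nat.choose_eq_zero_of_lt (by omega)
      simp [Nat.sub_self, h0]
    · intro h; simp at h
  · have hsubs : ({m, m+1} : Finset ℕ) ⊆ Finset.range n := by
      intro k hk; simp at hk; simp; omega
    rw [← Finset.sum_subset hsubs]
    · rw [Finset.sum_pair (by omega : m ≠ m + 1)]
      have h4 : (n - (m+1)).choose (n-1-m) = 1 := by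
        rw [(by omega : n-1-m = n-(m+1))]; exact Nat.choose_self _
      have h5 : (n-(m+1)).choose (n-1-(m+1)) = n - (m+1) := by
        have e : n - 1 - (m+1) = (n - (m+1)) - 1 := by omega
        have := Nat.choose_symm (n := n - (m+1)) (k := 1) (by omega)
        rw [e]
        simpa [Nat.choose_one_right] using this
      have hc : ((n - (m+1) : ℕ) : ℤ) = (n:ℤ) - m - 1 := by omega
      rw [h4, h5, h1, Nat.choose_self]
      push_cast [hc]
      ring
    · intro k hk hknot
      simp at hknot
      have hk' : k < n := Finset.mem_range.mp hk
      rcases lt_or_ge k (m+1) with h | h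
      · have : n - (m+1) < n - 1 - k := by omega
        simp [Nat.choose_eq_zero_of_lt this]
      · have : m + 1 < k := by omega
        simp [Nat.choose_eq_zero_of_lt this]

theorem upper_half_even_dual_feasible (n d : ℕ) (hn : 1 ≤ n) (hd : Even d)
    (hdn : d ≤ n) (h2d : n < 2 * d) :
    delsarteDualFeasible n d
      (fun j => (if j = 0 then 1 else 0) +
        (if j = 1 then (2 * (d : ℚ) - n + 1) / ((2 * d - n) * (2 * d - n + 2)) else 0) +
        (if j = n - 1 then 1 / ((2 * (d : ℚ) - n) * (2 * d - n + 2)) else 0)) ∧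
    ∑ j ∈ Finset.range (n + 1),
        ((if j = 0 then 1 else 0) +
          (if j = 1 then (2 * (d : ℚ) - n + 1) / ((2 * d - n) * (2 * d - n + 2)) else 0) +
          (if j = n - 1 then 1 / ((2 * (d : ℚ) - n) * (2 * d - n + 2)) else 0)) *
          (n.choose j : ℚ) =
      2 * d / (2 * d - n) := by
  have hd2 : 2 ≤ d := by
    rcases hd with ⟨k, hk⟩; omega
  have hn2 : 2 ≤ n := le_trans hd2 hdn
  set c1 : ℚ := (2 * (d : ℚ) - n + 1) / ((2 * d - n) * (2 * d - n + 2)) with hc1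
  set c2 : ℚ := 1 / ((2 * (d : ℚ) - n) * (2 * d - n + 2)) with hc2
  have hm : (0:ℚ) < 2 * d - n := by
    have : (n:ℚ) < 2 * d := by exact_mod_cast h2d
    linarith
  have hm2 : (0:ℚ) < 2 * d - n + 2 := by linarith
  have hden : (0:ℚ) < (2 * (d:ℚ) - n) * (2 * d - n + 2) := mul_pos hm hm2
  have hsum : ∀ X : ℕ → ℚ, ∑ j ∈ Finset.range (n+1),
      ((if j = 0 then 1 else 0) + (if j = 1 then c1 else 0) +
        (if j = n - 1 then c2 else 0)) * X j
      = X 0 + c1 * X 1 + c2 * X (n-1) := by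
    intro X
    simp only [add_mul, Finset.sum_add_distrib, ite_mul, one_mul, zero_mul]
    rw [Finset.sum_ite_eq' (Finset.range (n+1)) 0, Finset.sum_ite_eq' (Finset.range (n+1)) 1,
      Finset.sum_ite_eq' (Finset.range (n+1)) (n-1)]
    have h0 : (0:ℕ) ∈ Finset.range (n+1) := by simp
    have h1 : (1:ℕ) ∈ Finset.range (n+1) := by simp; omega
    have h2 : n - 1 ∈ Finset.range (n+1) := by simp
    simp [h0, h1, h2]
  refine ⟨⟨?_, ?_, ?_⟩, ?_⟩
  · simp [show ¬((0:ℕ) = n - 1) by omega]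
  · intro j hj
    have hc1p : 0 ≤ c1 := by
      rw [hc1]; apply div_nonneg _ (le_of_lt hden); linarith
    have hc2p : 0 ≤ c2 := by
      rw [hc2]; apply div_nonneg _ (le_of_lt hden); norm_num
    dsimp only
    apply add_nonneg (add_nonneg _ _) <;> split_ifs <;> norm_num <;> assumption
  · intro i hdi hin
    rw [hsum (fun j => ((kraw n (j:ℤ) (i:ℤ) : ℤ) : ℚ))]
    rw [kraw_zero n i hin, kraw_one n i hin, kraw_pred n i hn hin]
    have hid : (d:ℚ) ≤ i := by exact_mod_cast hdi
    have key : (1:ℚ) + c1 * ((n:ℚ) - 2*i) + c2 * ((-1)^i * ((n:ℚ) - 2*i))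
        = ((2*(d:ℚ)-n)*(2*d-n+2) + (2*d-n+1)*((n:ℚ)-2*i) + (-1)^i * ((n:ℚ)-2*i))
          / ((2*(d:ℚ)-n)*(2*d-n+2)) := by
      rw [hc1, hc2]; field_simp
    push_cast
    rw [key]
    apply div_nonpos_of_nonpos_of_nonneg _ (le_of_lt hden)
    rcases Nat.even_or_odd i with hie | hio
    · rw [hie.neg_one_pow]
      have : ((2*(d:ℚ)-n)*(2*d-n+2) + (2*d-n+1)*((n:ℚ)-2*i) + 1 * ((n:ℚ)-2*i))
          = (2*(d:ℚ)-n+2) * (2*d - 2*i) := by ring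
      rw [this]
      apply mul_nonpos_of_nonneg_of_nonpos (le_of_lt hm2)
      linarith
    · rw [hio.neg_one_pow]
      have hi1 : d + 1 ≤ i := by
        rcases eq_or_lt_of_le hdi with rfl | h
        · exact absurd hio (Nat.not_odd_iff_even.mpr hd)
        · omega
      have hid1 : (d:ℚ) + 1 ≤ i := by exact_mod_cast hi1
      have : ((2*(d:ℚ)-n)*(2*d-n+2) + (2*d-n+1)*((n:ℚ)-2*i) + (-1) * ((n:ℚ)-2*i))
          = (2*(d:ℚ)-n) * (2*d + 2 - 2*i) := by ring
      rw [this]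
      apply mul_nonpos_of_nonneg_of_nonpos (le_of_lt hm)
      linarith
  · rw [hsum (fun j => (n.choose j : ℚ))]
    have e0 : n.choose 0 = 1 := Nat.choose_zero_right n
    have e1 : n.choose 1 = n := Nat.choose_one_right n
    have e2 : n.choose (n-1) = n := by
      have := Nat.choose_symm (n := n) (k := 1) hn
      simpa [Nat.choose_one_right] using this
    rw [e0, e1, e2, hc1, hc2]
    field_simp
    ring
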